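/- For fixed d ≥ 1, with S1(n, L) = n^{dL}/(d^{d(L-1)}·d!) and P1(n, L) = L·n^2 (parameters of a deep network), and S2(m) = 2m·sum_{i=0}^{d-1} binom(m-1, i) + 2d·sum_{i=0}^{d-1} binom(m, i) with m = L·n^2 and P2 = L·n^2 (a shallow network with the same parameter count): for d ≥ 3 and L ≥ 2, the ratio S1/P1 grows at least like n^{dL-2}/(L·d^{d(L-1)}·d!), while S2/P2 is O((L·n^2)^{d-1}); hence for fixed L ≥ 2 and d ≥ 3 with dL - 2 > 2(d-1), S1/P1 / (S2/P2) → ∞ as n → ∞. -/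

import Mathlib

open Asymptotics

/-- Lower bound on the maximum number of simplices of an `L`-hidden-layer width-`n`
ReLU network with `d` inputs: `S1(n, L) = n^{dL}/(d^{d(L-1)}·d!)`. -/
noncomputable def S1 (d L n : ℕ) : ℝ :=
  (n : ℝ) ^ (d * L) / ((d : ℝ) ^ (d * (L - 1)) * (d.factorial : ℝ))

/-- Parameter count of both networks: `P(L, n) = L·n²`. -/
def P (L n : ℕ) : ℕ := L * n ^ 2

/-- Upper bound on the number of simplices of a one-hidden-layer ReLU network with `d`
inputs and `m` hidden neurons: `S2(m) = 2m·∑_{i<d} C(m-1,i) + 2d·∑_{i<d} C(m,i)`. -/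
noncomputable def S2 (d m : ℕ) : ℝ :=
  2 * (m : ℝ) * ∑ i ∈ Finset.range d, ((m - 1).choose i : ℝ) +
    2 * (d : ℝ) * ∑ i ∈ Finset.range d, (m.choose i : ℝ)

lemma S2_nonneg (d m : ℕ) : 0 ≤ S2 d m := by
  unfold S2
  positivity

lemma S2_pos (d m : ℕ) (hd : 1 ≤ d) (hm : 1 ≤ m) : 0 < S2 d m := by
  unfold S2
  have h1 : (1:ℝ) ≤ ∑ i ∈ Finset.range d, ((m - 1).choose i : ℝ) := by
    calc (1:ℝ) = ((m-1).choose 0 : ℝ) := by simp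
    _ ≤ _ := by
      apply Finset.single_le_sum (f := fun i => (((m-1).choose i : ℕ) : ℝ))
      · intro i _; positivity
      · exact Finset.mem_range.mpr (by omega)
  have h2 : 0 < 2 * (m:ℝ) := by positivity
  have h3 : 0 ≤ 2 * (d : ℝ) * ∑ i ∈ Finset.range d, (m.choose i : ℝ) := by positivity
  nlinarith

lemma S2_le (d m : ℕ) (hm : 1 ≤ m) :
    S2 d m ≤ (2 * d + 2 * d ^ 2) * (m : ℝ) ^ (d - 1) * m := by
  have key : ∀ k : ℕ, k ≤ m → ∀ i ∈ Finset.range d, ((k.choose i : ℕ) : ℝ) ≤ (m:ℝ) ^ (d-1) := by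
    intro k hk i hi
    have : k.choose i ≤ m ^ (d - 1) := by
      calc k.choose i ≤ k ^ i := Nat.choose_le_pow _ _
      _ ≤ m ^ i := Nat.pow_le_pow_left hk i
      _ ≤ m ^ (d-1) := Nat.pow_le_pow_right hm (by simp at hi; omega)
    exact_mod_cast this
  have h1 : ∑ i ∈ Finset.range d, ((m - 1).choose i : ℝ) ≤ d * (m:ℝ) ^ (d-1) := by
    calc _ ≤ ∑ i ∈ Finset.range d, (m:ℝ) ^ (d-1) :=
          Finset.sum_le_sum (key (m-1) (by omega))
    _ = d * (m:ℝ) ^ (d-1) := by simp [mul_comm]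
  have h2 : ∑ i ∈ Finset.range d, ((m).choose i : ℝ) ≤ d * (m:ℝ) ^ (d-1) := by
    calc _ ≤ ∑ i ∈ Finset.range d, (m:ℝ) ^ (d-1) :=
          Finset.sum_le_sum (key m le_rfl)
    _ = d * (m:ℝ) ^ (d-1) := by simp [mul_comm]
  have hm' : (1:ℝ) ≤ (m:ℝ) := by exact_mod_cast hm
  have hd0 : (0:ℝ) ≤ d := by positivity
  have hp : (0:ℝ) ≤ (m:ℝ) ^ (d-1) := by positivity
  unfold S2
  nlinarith [mul_le_mul_of_nonneg_left h1 (by positivity : (0:ℝ) ≤ 2 * (m:ℝ)),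
    mul_le_mul_of_nonneg_left h2 (by positivity : (0:ℝ) ≤ 2 * (d:ℝ)),
    mul_le_mul_of_nonneg_left hm' (by positivity : (0:ℝ) ≤ 2 * (d:ℝ) * ((d:ℝ) * (m:ℝ)^(d-1)))]

/-- for fixed `d ≥ 3`, `L ≥ 2` with `dL - 2 > 2(d-1)`:
the deep-network simplices-per-parameter ratio `S1/P1` is at least
`n^{dL-2}/(L·d^{d(L-1)}·d!)`; the shallow-network ratio `S2/P2` (with `m = L·n²` hidden
neurons) is `O((L·n²)^{d-1})`; and hence `(S1/P1)/(S2/P2) → ∞` as `n → ∞`. -/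
theorem stmt_19 (d L : ℕ) (hd : 3 ≤ d) (hL : 2 ≤ L)
    (hcond : 2 * (d - 1) < d * L - 2) :
    (∀ n : ℕ, 1 ≤ n →
      (n : ℝ) ^ (d * L - 2) / ((L : ℝ) * (d : ℝ) ^ (d * (L - 1)) * (d.factorial : ℝ))
        ≤ S1 d L n / (P L n : ℝ)) ∧
    ((fun n : ℕ => S2 d (L * n ^ 2) / (P L n : ℝ))
      =O[Filter.atTop] fun n : ℕ => ((L * n ^ 2 : ℕ) : ℝ) ^ (d - 1)) ∧
    Filter.Tendsto (fun n : ℕ => (S1 d L n / (P L n : ℝ)) / (S2 d (L * n ^ 2) / (P L n : ℝ)))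
      Filter.atTop Filter.atTop := by
  have hdfac : (0:ℝ) < (d.factorial : ℝ) := by exact_mod_cast d.factorial_pos
  have hdpow : (0:ℝ) < (d:ℝ) ^ (d * (L-1)) := by positivity
  have hL0 : (0:ℝ) < L := by exact_mod_cast (by omega : 0 < L)
  have part1 : ∀ n : ℕ, 1 ≤ n →
      (n : ℝ) ^ (d * L - 2) / ((L : ℝ) * (d : ℝ) ^ (d * (L - 1)) * (d.factorial : ℝ))
        = S1 d L n / (P L n : ℝ) := by
    intro n hn
    have hn0 : (0:ℝ) < (n:ℝ) := by exact_mod_cast (by omega : 0 < n)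
    have hsplit : (n:ℝ) ^ (d * L) = (n:ℝ) ^ (d * L - 2) * (n:ℝ) ^ 2 := by
      rw [← pow_add]; congr 1; have : 6 ≤ d * L := by nlinarith
      omega
    unfold S1 P
    push_cast
    rw [hsplit]
    field_simp
  -- Part 2
  have hbound : ∀ n : ℕ, 1 ≤ n →
      S2 d (L * n ^ 2) / (P L n : ℝ) ≤ (2*d + 2*d^2) * ((L * n ^ 2 : ℕ) : ℝ) ^ (d - 1) := by
    intro n hn
    have hm : 1 ≤ L * n ^ 2 := by nlinarith
    have hm0 : (0:ℝ) < ((L * n^2 : ℕ) : ℝ) := by exact_mod_cast hm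
    have := S2_le d (L * n ^ 2) hm
    unfold P
    rw [div_le_iff₀ hm0]
    exact this
  have part2 : (fun n : ℕ => S2 d (L * n ^ 2) / (P L n : ℝ))
      =O[Filter.atTop] fun n : ℕ => ((L * n ^ 2 : ℕ) : ℝ) ^ (d - 1) := by
    apply IsBigO.of_bound ((2*d + 2*d^2))
    filter_upwards [Filter.eventually_ge_atTop 1] with n hn
    have hm : 1 ≤ L * n ^ 2 := by nlinarith
    have hm0 : (0:ℝ) ≤ ((L * n^2 : ℕ) : ℝ) := by positivity
    rw [Real.norm_eq_abs, Real.norm_eq_abs,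
      abs_of_nonneg (div_nonneg (S2_nonneg d _) (Nat.cast_nonneg _)),
      abs_of_nonneg (by positivity)]
    exact hbound n hn
  refine ⟨fun n hn => (part1 n hn).le, part2, ?_⟩
  -- Part 3
  set D : ℝ := (L : ℝ) * (d : ℝ) ^ (d * (L - 1)) * (d.factorial : ℝ) with hD
  have hD0 : 0 < D := by positivity
  set C : ℝ := (2*d + 2*d^2) * (L:ℝ)^(d-1) with hC
  have hC0 : 0 < C := by positivity
  set e : ℕ := d * L - 2 - 2 * (d - 1) with he
  have he0 : 1 ≤ e := by omega
  have key : ∀ n : ℕ, 1 ≤ n →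
      (1 / (D * C)) * (n:ℝ) ^ e ≤
        (S1 d L n / (P L n : ℝ)) / (S2 d (L * n ^ 2) / (P L n : ℝ)) := by
    intro n hn
    have hn0 : (0:ℝ) < (n:ℝ) := by exact_mod_cast (by omega : 0 < n)
    have hm : 1 ≤ L * n ^ 2 := by nlinarith
    have hBpos : 0 < S2 d (L * n ^ 2) / (P L n : ℝ) := by
      apply div_pos (S2_pos d _ (by omega) hm)
      unfold P; exact_mod_cast (by positivity : (0:ℝ) < (L:ℝ) * (n:ℝ)^2)
    have hub : S2 d (L * n ^ 2) / (P L n : ℝ) ≤ C * (n:ℝ)^(2*(d-1)) := by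
      refine (hbound n hn).trans_eq ?_
      rw [hC]
      push_cast
      rw [mul_pow, ← pow_mul]
      ring
    have hlb : (n:ℝ) ^ (d * L - 2) / D ≤ S1 d L n / (P L n : ℝ) := (part1 n hn).le
    have hub0 : (0:ℝ) < C * (n:ℝ)^(2*(d-1)) := by positivity
    calc (1 / (D * C)) * (n:ℝ) ^ e
        = ((n:ℝ) ^ (d*L-2) / D) / (C * (n:ℝ)^(2*(d-1))) := by
          have : (n:ℝ) ^ (d*L-2) = (n:ℝ)^e * (n:ℝ)^(2*(d-1)) := by
            rw [← pow_add]; congr 1; omega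
          rw [this]; field_simp
    _ ≤ (S1 d L n / (P L n : ℝ)) / (S2 d (L * n ^ 2) / (P L n : ℝ)) := by
          apply div_le_div₀ (le_trans (by positivity) hlb) hlb hBpos hub
  apply Filter.tendsto_atTop_mono' _ _ ?_
  · exact fun n => (1 / (D * C)) * (n:ℝ) ^ e
  · filter_upwards [Filter.eventually_ge_atTop 1] with n hn using key n hn
  · apply Filter.Tendsto.const_mul_atTop (by positivity)
    exact (Filter.tendsto_pow_atTop (by omega : e ≠ 0)).comp tendsto_natCast_atTop_atTop
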